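/- There exists a sparse Cantor set C₀ ⊂ [0,1] such that every orientation-preserving C¹ diffeomorphism of ℝ preserving C₀ restricts to the identity on C₀ (i.e., 𝔡𝔦𝔣𝔣^{1,+}(C₀) is trivial). -/

import Mathlib

open Set Filter Topology Asymptotics

/-- A Cantor subset of the reals: nonempty, compact, perfect, totally disconnected. -/
def IsCantorSet (C : Set ℝ) : Prop :=
  C.Nonempty ∧ IsCompact C ∧ Perfect C ∧ IsTotallyDisconnected C

/-- `C` is `σ`-sparse: any two points of `C` bound a complementary open interval of
relative length at least `σ`. -/
def SparseSet (σ : ℝ) (C : Set ℝ) : Prop :=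
  ∀ a ∈ C, ∀ b ∈ C, a < b →
    ∃ α β : ℝ, a ≤ α ∧ α < β ∧ β ≤ b ∧ Set.Ioo α β ∩ C = ∅ ∧ σ * (b - a) ≤ β - α

/-- `φ` is a `C¹` diffeomorphism of `ℝ` with inverse `ψ`. -/
def IsC1DiffeoPair (φ ψ : ℝ → ℝ) : Prop :=
  ContDiff ℝ 1 φ ∧ ContDiff ℝ 1 ψ ∧ Function.LeftInverse ψ φ ∧ Function.RightInverse ψ φ

namespace SparseCantor

/-- Lengths of the construction intervals: `len (n+1) = len n / 2^(n+2)`. -/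
noncomputable def len : ℕ → ℝ
  | 0 => 1
  | n + 1 => len n / 2 ^ (n + 2)

lemma len_pos : ∀ n, 0 < len n
  | 0 => one_pos
  | n + 1 => by
      rw [len]
      exact div_pos (len_pos n) (by positivity)

lemma len_succ (n : ℕ) : len (n + 1) = len n / 2 ^ (n + 2) := rfl

lemma len_succ_le (n : ℕ) : len (n + 1) ≤ len n / 4 := by
  rw [len_succ]
  apply div_le_div_of_nonneg_left (len_pos n).le (by norm_num)
  calc (4:ℝ) = 2 ^ 2 := by norm_num
  _ ≤ 2 ^ (n + 2) := by
      apply pow_le_pow_right₀ (by norm_num)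
      omega

lemma len_succ_lt (n : ℕ) : 2 * len (n + 1) ≤ len n / 2 := by
  have h := len_succ_le n
  nlinarith [len_pos n, len_pos (n+1)]

lemma len_le_one : ∀ n, len n ≤ 1
  | 0 => le_rfl
  | n + 1 => by
      have := len_succ_le n
      have := len_le_one n
      have := len_pos n
      linarith

lemma len_mono (n : ℕ) : len (n + 1) ≤ len n := by
  have := len_succ_le n
  have := len_pos n
  linarith

lemma len_le_geom : ∀ n, len n ≤ (1/4 : ℝ) ^ n
  | 0 => by norm_num [len]
  | n + 1 => by
      have h1 := len_succ_le n
      have h2 := len_le_geom n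
      have : len n / 4 ≤ (1/4:ℝ)^n / 4 := by linarith
      calc len (n+1) ≤ len n / 4 := h1
        _ ≤ (1/4:ℝ)^n / 4 := this
        _ = (1/4:ℝ)^(n+1) := by ring

lemma len_tendsto : Tendsto len atTop (𝓝 0) := by
  apply squeeze_zero (fun n => (len_pos n).le) (fun n => len_le_geom n)
  exact tendsto_pow_atTop_nhds_zero_of_lt_one (by norm_num) (by norm_num)

/-- Left endpoint of the interval addressed by `s` (deepest choice first). -/
noncomputable def lep : List Bool → ℝ
  | [] => 0
  | b :: s => lep s + if b then len s.length - len (s.length + 1) else 0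

/-- The construction interval addressed by `s`. -/
noncomputable def Iv (s : List Bool) : Set ℝ := Icc (lep s) (lep s + len s.length)

lemma lep_false (s : List Bool) : lep (false :: s) = lep s := by simp [lep]

lemma lep_true (s : List Bool) :
    lep (true :: s) = lep s + len s.length - len (s.length + 1) := by
  simp [lep]; ring

lemma Iv_cons_subset (b : Bool) (s : List Bool) : Iv (b :: s) ⊆ Iv s := by
  cases b
  · rw [Iv, Iv, lep_false]
    apply Icc_subset_Icc le_rfl
    simp only [List.length_cons]
    have := len_mono s.length
    linarith
  · rw [Iv, Iv, lep_true]
    apply Icc_subset_Icc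
    · have h1 := len_pos (s.length + 1)
      have h2 := len_succ_lt s.length
      have h3 := len_pos s.length
      linarith
    · simp only [List.length_cons]
      linarith

lemma Iv_drop_subset (s : List Bool) : ∀ k, Iv s ⊆ Iv (s.drop k) := by
  induction s with
  | nil => intro k; simp
  | cons b s ih =>
    intro k
    cases k with
    | zero => simp
    | succ j =>
      simp only [List.drop_succ_cons]
      exact (Iv_cons_subset b s).trans (ih j)

lemma mem_Iv_self (s : List Bool) : lep s ∈ Iv s :=
  ⟨le_rfl, by linarith [len_pos s.length]⟩

lemma right_mem_Iv (s : List Bool) : lep s + len s.length ∈ Iv s :=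
  ⟨by linarith [len_pos s.length], le_rfl⟩

/-- Distinct intervals at the same depth are disjoint. -/
lemma Iv_disjoint : ∀ s t : List Bool, s.length = t.length → s ≠ t →
    Iv s ∩ Iv t = ∅ := by
  intro s
  induction s with
  | nil => intro t hl hne; cases t <;> simp_all
  | cons a s ih =>
    intro t hl hne
    cases t with
    | nil => simp at hl
    | cons b t =>
      simp only [List.length_cons, Nat.succ.injEq] at hl
      by_cases hst : s = t
      · subst hst
        have hab : a ≠ b := fun h => hne (by rw [h])
        -- the two children of `Iv s` are separated by the middle gap
        have key : ∀ x, x ∈ Iv (false :: s) → x ∈ Iv (true :: s) → False := by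
          intro x hx hy
          rw [Iv, lep_false] at hx
          rw [Iv, lep_true] at hy
          simp only [List.length_cons, mem_Icc] at hx hy
          have h2 := len_succ_lt s.length
          have h3 := len_pos (s.length + 1)
          linarith [hx.2, hy.1]
        ext x
        simp only [mem_inter_iff, mem_empty_iff_false, iff_false, not_and]
        intro hx hy
        cases a <;> cases b
        · exact hab rfl
        · exact key x hx hy
        · exact key x hy hx
        · exact hab rfl
      · have : Iv s ∩ Iv t = ∅ := ih t hl hst
        ext x
        simp only [mem_inter_iff, mem_empty_iff_false, iff_false, not_and]
        intro hx hy
        have : x ∈ Iv s ∩ Iv t := ⟨Iv_cons_subset a s hx, Iv_cons_subset b t hy⟩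
        simp_all

/-- Stage `n` of the construction. -/
noncomputable def Cn (n : ℕ) : Set ℝ := ⋃ s ∈ {s : List Bool | s.length = n}, Iv s

/-- The sparse Cantor set. -/
noncomputable def C0 : Set ℝ := ⋂ n, Cn n

lemma Cn_zero : Cn 0 = Icc 0 1 := by
  ext x
  simp only [Cn, mem_iUnion, mem_setOf_eq, exists_prop]
  constructor
  · rintro ⟨s, hs, hx⟩
    rw [List.length_eq_zero_iff] at hs
    subst hs
    simpa [Iv, lep, len] using hx
  · intro hx
    exact ⟨[], rfl, by simpa [Iv, lep, len] using hx⟩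

lemma C0_subset_Icc : C0 ⊆ Icc 0 1 := by
  intro x hx
  have := mem_iInter.mp hx 0
  rwa [Cn_zero] at this

lemma mem_Cn_iff {x : ℝ} {n : ℕ} : x ∈ Cn n ↔ ∃ s : List Bool, s.length = n ∧ x ∈ Iv s := by
  simp [Cn]

/-- A point of `C0` that lies in a depth-`n` interval lies in one of its children. -/
lemma mem_child {x : ℝ} (hx : x ∈ C0) {s : List Bool} (hxs : x ∈ Iv s) :
    ∃ b, x ∈ Iv (b :: s) := by
  have h := mem_iInter.mp hx (s.length + 1)
  rcases mem_Cn_iff.mp h with ⟨t, ht, hxt⟩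
  cases t with
  | nil => simp at ht
  | cons b t' =>
    simp only [List.length_cons, Nat.succ.injEq] at ht
    have hxt' : x ∈ Iv t' := Iv_cons_subset b t' hxt
    have : t' = s := by
      by_contra hne
      have := Iv_disjoint t' s (by omega) hne
      have : x ∈ Iv t' ∩ Iv s := ⟨hxt', hxs⟩
      simp_all
    subst this
    exact ⟨b, hxt⟩


lemma lep_replicate_false (s : List Bool) : ∀ k, lep (List.replicate k false ++ s) = lep s
  | 0 => rfl
  | k + 1 => by
      rw [List.replicate_succ, List.cons_append, lep_false, lep_replicate_false s k]

lemma lep_replicate_true (s : List Bool) : ∀ k,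
    lep (List.replicate k true ++ s) + len (List.replicate k true ++ s).length
      = lep s + len s.length
  | 0 => rfl
  | k + 1 => by
      rw [List.replicate_succ, List.cons_append, lep_true]
      have h := lep_replicate_true s k
      simp only [List.length_cons, List.length_append, List.length_replicate] at *
      linarith [h]

lemma lep_mem_C0 (s : List Bool) : lep s ∈ C0 := by
  rw [C0, mem_iInter]
  intro m
  rcases le_or_gt m s.length with hm | hm
  · refine mem_Cn_iff.mpr ⟨s.drop (s.length - m), by simp; omega, ?_⟩
    exact Iv_drop_subset s _ (mem_Iv_self s)
  · refine mem_Cn_iff.mpr ⟨List.replicate (m - s.length) false ++ s, by simp; omega, ?_⟩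
    rw [← lep_replicate_false s (m - s.length)]
    exact mem_Iv_self _

lemma rep_mem_C0 (s : List Bool) : lep s + len s.length ∈ C0 := by
  rw [C0, mem_iInter]
  intro m
  rcases le_or_gt m s.length with hm | hm
  · refine mem_Cn_iff.mpr ⟨s.drop (s.length - m), by simp; omega, ?_⟩
    exact Iv_drop_subset s _ (right_mem_Iv s)
  · refine mem_Cn_iff.mpr ⟨List.replicate (m - s.length) true ++ s, by simp; omega, ?_⟩
    rw [← lep_replicate_true s (m - s.length)]
    exact right_mem_Iv _

/-- Left endpoint of the middle gap of `Iv s`. -/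
noncomputable def gapL (s : List Bool) : ℝ := lep s + len (s.length + 1)

/-- Right endpoint of the middle gap of `Iv s`. -/
noncomputable def gapR (s : List Bool) : ℝ := lep s + len s.length - len (s.length + 1)

/-- Length of the middle gap at depth `n`. -/
noncomputable def glen (n : ℕ) : ℝ := len n - 2 * len (n + 1)

lemma gap_sub (s : List Bool) : gapR s - gapL s = glen s.length := by
  rw [gapL, gapR, glen]; ring

lemma glen_ge_half (n : ℕ) : len n / 2 ≤ glen n := by
  have := len_succ_lt n; rw [glen]; linarith

lemma glen_le_len (n : ℕ) : glen n ≤ len n := by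
  have := len_pos (n + 1); rw [glen]; linarith

lemma glen_pos (n : ℕ) : 0 < glen n :=
  lt_of_lt_of_le (by linarith [len_pos n]) (glen_ge_half n)

lemma glen_succ_le (n : ℕ) : glen (n + 1) ≤ glen n / 2 ^ (n + 1) := by
  have hp : (0:ℝ) < 2 ^ (n + 1) := by positivity
  rw [le_div_iff₀ hp]
  have h1 : glen (n + 1) ≤ len (n + 1) := glen_le_len (n + 1)
  have h2 : len (n + 1) * 2 ^ (n + 1) = len n / 2 := by
    rw [len_succ, pow_succ]
    field_simp
  have h3 := glen_ge_half n
  nlinarith [glen_pos (n + 1)]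

lemma glen_anti : Antitone glen := by
  apply antitone_nat_of_succ_le
  intro n
  have h := glen_succ_le n
  have hg := glen_pos n
  have h1 : (1:ℝ) ≤ 2 ^ (n + 1) := one_le_pow₀ (by norm_num)
  calc glen (n + 1) ≤ glen n / 2 ^ (n + 1) := h
    _ ≤ glen n := div_le_self hg.le h1

lemma gapL_lt_gapR (s : List Bool) : gapL s < gapR s := by
  have := gap_sub s
  have := glen_pos s.length
  linarith

lemma gapL_mem_C0 (s : List Bool) : gapL s ∈ C0 := by
  have h : gapL s = lep (false :: s) + len (false :: s).length := by
    rw [gapL, lep_false]; simp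
  rw [h]; exact rep_mem_C0 _

lemma gapR_mem_C0 (s : List Bool) : gapR s ∈ C0 := by
  have h : gapR s = lep (true :: s) := by rw [gapR, lep_true]
  rw [h]; exact lep_mem_C0 _

lemma gap_subset_Iv (s : List Bool) : Ioo (gapL s) (gapR s) ⊆ Iv s := by
  intro x hx
  rcases hx with ⟨h1, h2⟩
  rw [gapL] at h1; rw [gapR] at h2
  constructor
  · linarith [len_pos (s.length + 1)]
  · linarith [len_pos (s.length + 1)]

lemma gap_inter_C0 (s : List Bool) : Ioo (gapL s) (gapR s) ∩ C0 = ∅ := by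
  ext x
  simp only [mem_inter_iff, mem_empty_iff_false, iff_false, not_and]
  intro hx hxC
  have hxI : x ∈ Iv s := gap_subset_Iv s hx
  rcases mem_child hxC hxI with ⟨b, hb⟩
  cases b
  · rw [Iv, lep_false] at hb
    have : x ≤ gapL s := by
      have := hb.2; simp only [List.length_cons] at this
      rw [gapL]; linarith
    exact absurd hx.1 (not_lt.mpr this)
  · rw [Iv, lep_true] at hb
    have : gapR s ≤ x := by
      have := hb.1
      rw [gapR]; linarith
    exact absurd hx.2 (not_lt.mpr this)

/-- Every point of `[0,1]` outside `C0` lies in one of the middle gaps. -/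
lemma mem_gap_of_not_mem_Cn : ∀ n, ∀ x ∈ Icc (0:ℝ) 1,
    x ∈ Cn n ∨ ∃ s : List Bool, x ∈ Ioo (gapL s) (gapR s) := by
  intro n
  induction n with
  | zero => intro x hx; left; rwa [Cn_zero]
  | succ n ih =>
    intro x hx
    rcases ih x hx with h | h
    · rcases mem_Cn_iff.mp h with ⟨s, hs, hxs⟩
      by_cases hc : ∃ b, x ∈ Iv (b :: s)
      · rcases hc with ⟨b, hb⟩
        left
        exact mem_Cn_iff.mpr ⟨b :: s, by simp [hs], hb⟩
      · push_neg at hc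
        right
        refine ⟨s, ?_, ?_⟩
        · have h1 := hc false
          rw [Iv, lep_false] at h1
          simp only [List.length_cons, mem_Icc, not_and, not_le] at h1
          have := h1 hxs.1
          rwa [gapL]
        · have h1 := hc true
          rw [Iv, lep_true] at h1
          simp only [List.length_cons, mem_Icc, not_and, not_le] at h1
          rw [gapR]
          by_contra hcon
          push_neg at hcon
          have h2 := h1 (by linarith)
          have := hxs.2
          linarith
    · exact Or.inr h

lemma mem_gap_of_not_mem {x : ℝ} (hx : x ∈ Icc (0:ℝ) 1) (hxC : x ∉ C0) :
    ∃ s : List Bool, x ∈ Ioo (gapL s) (gapR s) := by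
  have : ∃ n, x ∉ Cn n := by
    by_contra h
    push_neg at h
    exact hxC (mem_iInter.mpr h)
  rcases this with ⟨n, hn⟩
  rcases mem_gap_of_not_mem_Cn n x hx with h | h
  · exact absurd h hn
  · exact h

/-- The sparsity property, in a structured form. -/
lemma sparse_gap {a b : ℝ} (ha : a ∈ C0) (hb : b ∈ C0) (hab : a < b) :
    ∃ s : List Bool, a ≤ gapL s ∧ gapR s ≤ b ∧ b - a ≤ len s.length := by
  have hP : ∃ n, ∀ s : List Bool, s.length = n → ¬(a ∈ Iv s ∧ b ∈ Iv s) := by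
    have : ∃ n, len n < b - a := by
      rcases (len_tendsto.eventually (eventually_lt_nhds (by linarith : (0:ℝ) < b - a))).exists
        with ⟨n, hn⟩
      exact ⟨n, hn⟩
    rcases this with ⟨n, hn⟩
    refine ⟨n, fun s hs ⟨has, hbs⟩ => ?_⟩
    rcases has with ⟨h1, h2⟩
    rcases hbs with ⟨h3, h4⟩
    rw [hs] at h2 h4
    linarith
  classical
  set n₀ := Nat.find hP with hn₀
  have hfind := Nat.find_spec hP
  have hn₀pos : 0 < n₀ := by
    rcases Nat.eq_zero_or_pos n₀ with h | h
    · exfalso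
      have := hfind
      rw [← hn₀] at this
      have h0 : a ∈ Iv ([] : List Bool) ∧ b ∈ Iv ([] : List Bool) := by
        have ha0 : a ∈ Cn 0 := mem_iInter.mp ha 0
        have hb0 : b ∈ Cn 0 := mem_iInter.mp hb 0
        rw [Cn_zero] at ha0 hb0
        constructor <;> · rw [Iv]; simpa [lep, len] using ‹_ ∈ Icc (0:ℝ) 1›
      exact this ([] : List Bool) (by rw [h]; rfl) h0
    · exact h
  have hprev : ¬ ∀ s : List Bool, s.length = n₀ - 1 → ¬(a ∈ Iv s ∧ b ∈ Iv s) :=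
    Nat.find_min hP (by omega)
  push_neg at hprev
  rcases hprev with ⟨s, hs, has, hbs⟩
  rcases mem_child ha has with ⟨ca, hca⟩
  rcases mem_child hb hbs with ⟨cb, hcb⟩
  have hcane : ca ≠ cb → True := fun _ => trivial
  have hlen : (ca :: s).length = n₀ := by simp; omega
  have hne : ca ≠ cb := by
    intro h
    subst h
    exact hfind (ca :: s) hlen ⟨hca, hcb⟩
  have hlen2 : b - a ≤ len s.length := by
    rcases has with ⟨h1, h2⟩
    rcases hbs with ⟨h3, h4⟩
    linarith
  cases ca
  · cases cb
    · exact absurd rfl hne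
    · -- a in left child, b in right child
      refine ⟨s, ?_, ?_, hlen2⟩
      · rw [Iv, lep_false] at hca
        have := hca.2
        simp only [List.length_cons] at this
        rw [gapL]; linarith
      · rw [Iv, lep_true] at hcb
        have := hcb.1
        rw [gapR]; linarith
  · cases cb
    · -- impossible: a in right child, b in left child, but a < b
      exfalso
      rw [Iv, lep_true] at hca
      rw [Iv, lep_false] at hcb
      have h1 := hca.1
      have h2 := hcb.2
      simp only [List.length_cons] at h2
      have := len_succ_lt s.length
      have := len_pos (s.length + 1)
      linarith
    · exact absurd rfl hne

lemma sparseSet_C0 : SparseSet (1/2) C0 := by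
  intro a ha b hb hab
  rcases sparse_gap ha hb hab with ⟨s, h1, h2, h3⟩
  refine ⟨gapL s, gapR s, h1, gapL_lt_gapR s, h2, gap_inter_C0 s, ?_⟩
  have h4 := gap_sub s
  have h5 := glen_ge_half s.length
  linarith

lemma isClosed_Cn (n : ℕ) : IsClosed (Cn n) := by
  apply Set.Finite.isClosed_biUnion (List.finite_length_eq Bool n)
  intro s _
  exact isClosed_Icc

lemma isClosed_C0 : IsClosed C0 := isClosed_iInter fun n => isClosed_Cn n

lemma isCompact_C0 : IsCompact C0 :=
  isCompact_Icc.of_isClosed_subset isClosed_C0 C0_subset_Icc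

lemma zero_mem_C0 : (0:ℝ) ∈ C0 := by
  have := lep_mem_C0 ([] : List Bool)
  simpa [lep] using this

lemma perfect_C0 : Perfect C0 := by
  refine ⟨isClosed_C0, fun x hx => ?_⟩
  rw [accPt_iff_nhds]
  intro U hU
  rcases Metric.mem_nhds_iff.mp hU with ⟨ε, hε, hball⟩
  rcases (len_tendsto.eventually (eventually_lt_nhds hε)).exists with ⟨n, hn⟩
  rcases mem_Cn_iff.mp (mem_iInter.mp hx n) with ⟨s, hs, hxs⟩
  rcases has_ne : hxs with ⟨h1, h2⟩
  by_cases hxe : x = lep s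
  · refine ⟨lep s + len s.length, ⟨?_, rep_mem_C0 s⟩, ?_⟩
    · apply hball
      rw [Metric.mem_ball, Real.dist_eq, hxe, hs]
      rw [abs_sub_lt_iff]
      constructor <;> linarith [len_pos n]
    · rw [hxe, hs]
      intro h
      have := len_pos n
      linarith [(by linarith : lep s + len n = lep s)]
  · refine ⟨lep s, ⟨?_, lep_mem_C0 s⟩, fun h => hxe h.symm⟩
    apply hball
    rw [Metric.mem_ball, Real.dist_eq, hs] at *
    rw [abs_sub_lt_iff]
    constructor <;> linarith

lemma no_two_points {t : Set ℝ} (ht : t ⊆ C0) (hconn : IsPreconnected t)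
    {x y : ℝ} (hx : x ∈ t) (hy : y ∈ t) (hxy : x < y) : False := by
  rcases sparse_gap (ht hx) (ht hy) hxy with ⟨s, h1, h2, _⟩
  set γ := (gapL s + gapR s) / 2 with hγ
  have hγ1 : gapL s < γ := by have := gapL_lt_gapR s; rw [hγ]; linarith
  have hγ2 : γ < gapR s := by have := gapL_lt_gapR s; rw [hγ]; linarith
  have hγC : γ ∉ C0 := by
    intro h
    have : γ ∈ Ioo (gapL s) (gapR s) ∩ C0 := ⟨⟨hγ1, hγ2⟩, h⟩
    rw [gap_inter_C0] at this
    exact this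
  have := hconn (Iio γ) (Ioi γ) isOpen_Iio isOpen_Ioi
    (fun z hz => by
      rcases lt_trichotomy z γ with h | h | h
      · exact Or.inl h
      · exact absurd (h ▸ ht hz) hγC
      · exact Or.inr h)
    ⟨x, hx, by simp only [mem_Iio]; linarith⟩ ⟨y, hy, by simp only [mem_Ioi]; linarith⟩
  rcases this with ⟨z, _, hz1, hz2⟩
  simp only [mem_Iio, mem_Ioi] at hz1 hz2
  linarith

lemma totallyDisconnected_C0 : IsTotallyDisconnected C0 := by
  intro t ht hconn x hx y hy
  by_contra hne
  rcases lt_or_gt_of_ne hne with h | h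
  · exact no_two_points ht hconn hx hy h
  · exact no_two_points ht hconn hy hx h


lemma Iv_subset_unit (s : List Bool) : Iv s ⊆ Icc 0 1 := by
  have h := Iv_drop_subset s s.length
  rw [List.drop_length] at h
  intro x hx
  have := h hx
  rw [Iv] at this
  simpa [lep, len] using this

section Diffeo

variable {φ ψ : ℝ → ℝ}

lemma deriv_chain (h : IsC1DiffeoPair φ ψ) (x : ℝ) : deriv ψ (φ x) * deriv φ x = 1 := by
  have h1 : HasDerivAt φ (deriv φ x) x :=
    ((h.1.differentiable one_ne_zero) x).hasDerivAt
  have h2 : HasDerivAt ψ (deriv ψ (φ x)) (φ x) :=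
    ((h.2.1.differentiable one_ne_zero) (φ x)).hasDerivAt
  have h3 : HasDerivAt (ψ ∘ φ) (deriv ψ (φ x) * deriv φ x) x := h2.comp x h1
  have h4 : ψ ∘ φ = id := funext h.2.2.1
  rw [h4] at h3
  exact h3.unique (hasDerivAt_id x)

lemma deriv_ne_zero (h : IsC1DiffeoPair φ ψ) (x : ℝ) : deriv φ x ≠ 0 := by
  intro h0
  have := deriv_chain h x
  rw [h0, mul_zero] at this
  norm_num at this

lemma deriv_pos (h : IsC1DiffeoPair φ ψ) (hmono : StrictMono φ) (x : ℝ) :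
    0 < deriv φ x := by
  have hc : Continuous (deriv φ) := h.1.continuous_deriv le_rfl
  have hd : Differentiable ℝ φ := h.1.differentiable one_ne_zero
  -- find a point with positive derivative via MVT
  obtain ⟨ξ, hξmem, hξ⟩ := exists_deriv_eq_slope φ (show x - 1 < x + 1 by linarith)
    (hd.continuous.continuousOn) (hd.differentiableOn)
  have hpos : 0 < deriv φ ξ := by
    rw [hξ]
    have : φ (x - 1) < φ (x + 1) := hmono (by linarith)
    apply div_pos <;> linarith
  rcases lt_trichotomy (deriv φ x) 0 with hneg | h0 | hpos'
  · exfalso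
    have h0mem : (0:ℝ) ∈ uIcc (deriv φ x) (deriv φ ξ) := by
      rw [mem_uIcc]
      left
      exact ⟨hneg.le, hpos.le⟩
    obtain ⟨z, _, hz⟩ := intermediate_value_uIcc (hc.continuousOn) h0mem
    exact deriv_ne_zero h z hz
  · exact absurd h0 (deriv_ne_zero h x)
  · exact hpos'

lemma exists_deriv_bounds (h : IsC1DiffeoPair φ ψ) (hmono : StrictMono φ) :
    ∃ c M : ℝ, 0 < c ∧ ∀ ξ ∈ Icc (0:ℝ) 1, c ≤ deriv φ ξ ∧ deriv φ ξ ≤ M := by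
  have hc : Continuous (deriv φ) := h.1.continuous_deriv le_rfl
  obtain ⟨ξ₀, hξ₀mem, hmin⟩ := (isCompact_Icc (a := (0:ℝ)) (b := 1)).exists_isMinOn
    (nonempty_Icc.mpr (by norm_num)) hc.continuousOn
  obtain ⟨ξ₁, hξ₁mem, hmax⟩ := (isCompact_Icc (a := (0:ℝ)) (b := 1)).exists_isMaxOn
    (nonempty_Icc.mpr (by norm_num)) hc.continuousOn
  refine ⟨deriv φ ξ₀, deriv φ ξ₁, deriv_pos h hmono ξ₀, fun ξ hξ => ⟨hmin hξ, hmax hξ⟩⟩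

lemma psi_strictMono (h : IsC1DiffeoPair φ ψ) (hmono : StrictMono φ) : StrictMono ψ := by
  intro a b hab
  rw [← hmono.lt_iff_lt, h.2.2.2 a, h.2.2.2 b]
  exact hab

lemma psi_image (h : IsC1DiffeoPair φ ψ) (himg : φ '' C0 = C0) : ψ '' C0 = C0 := by
  conv_lhs => rw [← himg]
  rw [← Set.image_comp]
  have h4 : ψ ∘ φ = id := funext h.2.2.1
  rw [h4, Set.image_id]

/-- The image of a middle gap under `φ` is a middle gap. -/
lemma gap_image (h : IsC1DiffeoPair φ ψ) (hmono : StrictMono φ) (himg : φ '' C0 = C0)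
    (s : List Bool) : ∃ t : List Bool, φ (gapL s) = gapL t ∧ φ (gapR s) = gapR t := by
  set p := gapL s with hp
  set q := gapR s with hq
  have hpq : p < q := gapL_lt_gapR s
  have hpC : φ p ∈ C0 := himg ▸ mem_image_of_mem φ (gapL_mem_C0 s)
  have hqC : φ q ∈ C0 := himg ▸ mem_image_of_mem φ (gapR_mem_C0 s)
  have hφpq : φ p < φ q := hmono hpq
  have hψm := psi_strictMono h hmono
  have hψi := psi_image h himg
  -- the open interval (φ p, φ q) misses C0
  have hfree : ∀ z, φ p < z → z < φ q → z ∉ C0 := by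
    intro z h1 h2 hzC
    have hz1 : p < ψ z := by
      have := hψm h1
      rwa [h.2.2.1 p] at this
    have hz2 : ψ z < q := by
      have := hψm h2
      rwa [h.2.2.1 q] at this
    have : ψ z ∈ C0 := hψi ▸ mem_image_of_mem ψ hzC
    have : ψ z ∈ Ioo (gapL s) (gapR s) ∩ C0 := ⟨⟨hz1, hz2⟩, this⟩
    rw [gap_inter_C0] at this
    exact this
  set x := (φ p + φ q) / 2 with hx
  have hx1 : φ p < x := by rw [hx]; linarith
  have hx2 : x < φ q := by rw [hx]; linarith
  have hxC : x ∉ C0 := hfree x hx1 hx2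
  have hxI : x ∈ Icc (0:ℝ) 1 := by
    have h1 := C0_subset_Icc hpC
    have h2 := C0_subset_Icc hqC
    constructor
    · have := h1.1; rw [hx]; linarith
    · have := h2.2; rw [hx]; linarith
  obtain ⟨t, hxt⟩ := mem_gap_of_not_mem hxI hxC
  refine ⟨t, ?_, ?_⟩
  · rcases lt_trichotomy (φ p) (gapL t) with hlt | heq | hgt
    · exfalso
      exact hfree (gapL t) hlt (lt_trans hxt.1 hx2) (gapL_mem_C0 t)
    · exact heq
    · exfalso
      have : φ p ∈ Ioo (gapL t) (gapR t) ∩ C0 :=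
        ⟨⟨hgt, lt_trans hx1 hxt.2⟩, hpC⟩
      rw [gap_inter_C0] at this
      exact this
  · rcases lt_trichotomy (φ q) (gapR t) with hlt | heq | hgt
    · exfalso
      have : φ q ∈ Ioo (gapL t) (gapR t) ∩ C0 :=
        ⟨⟨lt_trans hxt.1 hx2, hlt⟩, hqC⟩
      rw [gap_inter_C0] at this
      exact this
    · exact heq
    · exfalso
      exact hfree (gapR t) (lt_trans hx1 hxt.2) hgt (gapR_mem_C0 t)

/-- For deep enough gaps, the image gap has the same depth. -/
lemma gap_depth (h : IsC1DiffeoPair φ ψ) (hmono : StrictMono φ) (himg : φ '' C0 = C0) :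
    ∃ N : ℕ, 1 ≤ N ∧ ∀ s : List Bool, N ≤ s.length →
      ∃ t : List Bool, t.length = s.length ∧ φ (gapL s) = gapL t ∧ φ (gapR s) = gapR t := by
  obtain ⟨c, M, hc, hbound⟩ := exists_deriv_bounds h hmono
  obtain ⟨N₁, hN₁⟩ := pow_unbounded_of_one_lt (1 / c) (by norm_num : (1:ℝ) < 2)
  obtain ⟨N₂, hN₂⟩ := pow_unbounded_of_one_lt M (by norm_num : (1:ℝ) < 2)
  refine ⟨max (max N₁ N₂) 1, le_max_right _ 1, fun s hs => ?_⟩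
  set n := s.length with hn
  have hn1 : 1 ≤ n := le_trans (le_max_right _ 1) hs
  have h2n : (2:ℝ) ^ N₁ ≤ 2 ^ n :=
    pow_le_pow_right₀ (by norm_num) (le_trans (le_trans (le_max_left _ _) (le_max_left _ 1)) hs)
  have h2n' : (2:ℝ) ^ N₂ ≤ 2 ^ n :=
    pow_le_pow_right₀ (by norm_num) (le_trans (le_trans (le_max_right _ _) (le_max_left _ 1)) hs)
  have hcn : 1 / c < 2 ^ n := lt_of_lt_of_le hN₁ h2n
  have hMn : M < 2 ^ n := lt_of_lt_of_le hN₂ h2n'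
  obtain ⟨t, ht1, ht2⟩ := gap_image h hmono himg s
  refine ⟨t, ?_, ht1, ht2⟩
  -- mean value theorem on the gap
  obtain ⟨ξ, hξmem, hξ⟩ := exists_deriv_eq_slope φ (gapL_lt_gapR s)
    ((h.1.differentiable one_ne_zero).continuous.continuousOn)
    ((h.1.differentiable one_ne_zero).differentiableOn)
  have hξI : ξ ∈ Icc (0:ℝ) 1 :=
    Iv_subset_unit s (gap_subset_Iv s ⟨hξmem.1, hξmem.2⟩)
  have hslope : φ (gapR s) - φ (gapL s) = deriv φ ξ * glen n := by
    have hne : gapR s - gapL s ≠ 0 := by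
      have := gapL_lt_gapR s; intro h0; linarith [sub_eq_zero.mp h0]
    rw [hξ, ← gap_sub s, div_mul_cancel₀ _ hne]
  have hglen : glen t.length = deriv φ ξ * glen n := by
    rw [← hslope, ht1, ht2, gap_sub t]
  obtain ⟨hlb, hub⟩ := hbound ξ hξI
  have hgn := glen_pos n
  have hlo : c * glen n ≤ glen t.length := by
    rw [hglen]; nlinarith
  have hhi : glen t.length ≤ M * glen n := by
    rw [hglen]; nlinarith
  rcases lt_trichotomy t.length n with hlt | heq | hgt
  · exfalso
    have h1 : glen n ≤ glen (n - 1) / 2 ^ n := by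
      have := glen_succ_le (n - 1)
      have heq : n - 1 + 1 = n := by omega
      rwa [heq] at this
    have h2 : glen (n - 1) ≤ glen t.length := glen_anti (by omega)
    have hp : (0:ℝ) < 2 ^ n := by positivity
    -- glen t.length ≥ glen (n-1) ≥ 2^n * glen n > M * glen n ≥ glen t.length
    have h3 : glen n * 2 ^ n ≤ glen (n - 1) := (le_div_iff₀ hp).mp h1
    nlinarith [hhi, hMn, hgn, h2]
  · exact heq
  · exfalso
    have h1 : glen t.length ≤ glen (n + 1) := glen_anti (by omega)
    have h2 := glen_succ_le n
    have hp : (0:ℝ) < 2 ^ (n + 1) := by positivity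
    have hthis : 1 < c * 2 ^ n := by
      rw [div_lt_iff₀ hc] at hcn
      linarith
    have h3 : glen n / 2 ^ (n + 1) < c * glen n := by
      rw [div_lt_iff₀ hp]
      have h2e : (2:ℝ) ^ (n + 1) = 2 * 2 ^ n := by rw [pow_succ]; ring
      nlinarith [mul_pos (sub_pos.mpr hthis) hgn]
    linarith

end Diffeo

/-- A strictly monotone map carrying a finite set of reals onto itself fixes it pointwise. -/
lemma fix_of_finite {f : ℝ → ℝ} {S : Set ℝ} (hS : S.Finite) (hf : StrictMono f)
    (him : f '' S = S) : ∀ x ∈ S, f x = x := by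
  intro x hx
  by_contra hne
  rcases lt_or_gt_of_ne hne with hlt | hgt
  · -- f x < x : consider S ∩ Iic x
    set T := S ∩ Iic x with hT
    have hxT : x ∈ T := ⟨hx, by simp⟩
    have hTfin : T.Finite := hS.subset (inter_subset_left)
    have hsub : f '' T ⊆ T \ {x} := by
      rintro _ ⟨y, ⟨hyS, hyx⟩, rfl⟩
      have h1 : f y ∈ S := him ▸ mem_image_of_mem f hyS
      have h2 : f y ≤ f x := hf.monotone hyx
      refine ⟨⟨h1, mem_Iic.mpr (le_trans h2 hlt.le)⟩, ?_⟩
      intro hm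
      rw [mem_singleton_iff] at hm
      rw [hm] at h2
      linarith
    have e1 : (f '' T).ncard = T.ncard := ncard_image_of_injOn (hf.injective.injOn)
    have e2 : (f '' T).ncard ≤ (T \ {x}).ncard :=
      ncard_le_ncard hsub (hTfin.subset diff_subset)
    have e3 : (T \ {x}).ncard < T.ncard := ncard_diff_singleton_lt_of_mem hxT hTfin
    omega
  · set T := S ∩ Ici x with hT
    have hxT : x ∈ T := ⟨hx, by simp⟩
    have hTfin : T.Finite := hS.subset (inter_subset_left)
    have hsub : f '' T ⊆ T \ {x} := by
      rintro _ ⟨y, ⟨hyS, hyx⟩, rfl⟩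
      have h1 : f y ∈ S := him ▸ mem_image_of_mem f hyS
      have h2 : f x ≤ f y := hf.monotone hyx
      refine ⟨⟨h1, mem_Ici.mpr (le_trans hgt.le h2)⟩, ?_⟩
      intro hm
      rw [mem_singleton_iff] at hm
      rw [hm] at h2
      linarith
    have e1 : (f '' T).ncard = T.ncard := ncard_image_of_injOn (hf.injective.injOn)
    have e2 : (f '' T).ncard ≤ (T \ {x}).ncard :=
      ncard_le_ncard hsub (hTfin.subset diff_subset)
    have e3 : (T \ {x}).ncard < T.ncard := ncard_diff_singleton_lt_of_mem hxT hTfin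
    omega

/-- The set of left gap endpoints at depth `n`. -/
noncomputable def GLset (n : ℕ) : Set ℝ := gapL '' {s : List Bool | s.length = n}

lemma GLset_finite (n : ℕ) : (GLset n).Finite :=
  (List.finite_length_eq Bool n).image gapL

lemma gapL_mem_Iv (s : List Bool) : gapL s ∈ Iv s := by
  rw [gapL, Iv]
  constructor
  · linarith [len_pos (s.length + 1)]
  · linarith [len_mono s.length]

/-- Eventually, `φ` fixes all left gap endpoints. -/
lemma GL_fixed {φ ψ : ℝ → ℝ} (h : IsC1DiffeoPair φ ψ) (hmono : StrictMono φ)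
    (himg : φ '' C0 = C0) :
    ∃ N : ℕ, ∀ s : List Bool, N ≤ s.length → φ (gapL s) = gapL s := by
  obtain ⟨Nφ, _, hNφ⟩ := gap_depth h hmono himg
  have hψpair : IsC1DiffeoPair ψ φ := ⟨h.2.1, h.1, h.2.2.2, h.2.2.1⟩
  have hψmono : StrictMono ψ := psi_strictMono h hmono
  have hψimg : ψ '' C0 = C0 := psi_image h himg
  obtain ⟨Nψ, _, hNψ⟩ := gap_depth hψpair hψmono hψimg
  refine ⟨max Nφ Nψ, fun s hs => ?_⟩
  set n := s.length with hn
  have himgGL : φ '' GLset n = GLset n := by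
    apply Subset.antisymm
    · rintro _ ⟨_, ⟨u, hu, rfl⟩, rfl⟩
      obtain ⟨t, ht1, ht2, _⟩ := hNφ u (le_trans (le_max_left _ _) (hu ▸ hs))
      rw [ht2]
      exact ⟨t, by rw [mem_setOf_eq, ht1, hu], rfl⟩
    · rintro _ ⟨t, ht, rfl⟩
      obtain ⟨t', ht'1, ht'2, _⟩ := hNψ t (le_trans (le_max_right _ _) (ht ▸ hs))
      refine ⟨gapL t', ⟨t', by rw [mem_setOf_eq, ht'1, ht], rfl⟩, ?_⟩
      rw [← ht'2, h.2.2.2 (gapL t)]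
  exact fix_of_finite (GLset_finite n) hmono himgGL (gapL s) ⟨s, rfl, rfl⟩

/-- Every orientation-preserving `C¹` diffeomorphism preserving `C0` is the identity on `C0`. -/
lemma fix_on_C0 {φ ψ : ℝ → ℝ} (h : IsC1DiffeoPair φ ψ) (hmono : StrictMono φ)
    (himg : φ '' C0 = C0) : ∀ x ∈ C0, φ x = x := by
  obtain ⟨N, hfix⟩ := GL_fixed h hmono himg
  intro x hx
  choose S hlen hmem using fun n => mem_Cn_iff.mp (mem_iInter.mp hx n)
  have hdist : ∀ n, dist (gapL (S n)) x ≤ len n := by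
    intro n
    have h1 := gapL_mem_Iv (S n)
    have h2 := hmem n
    rw [Iv, mem_Icc, hlen n] at h1 h2
    rw [Real.dist_eq, abs_sub_le_iff]
    constructor <;> linarith [h1.1, h1.2, h2.1, h2.2]
  have htend : Tendsto (fun n => gapL (S n)) atTop (𝓝 x) := by
    rw [tendsto_iff_dist_tendsto_zero]
    exact squeeze_zero (fun n => dist_nonneg) hdist len_tendsto
  have h1 : Tendsto (fun n => φ (gapL (S n))) atTop (𝓝 (φ x)) :=
    ((h.1.continuous).tendsto x).comp htend
  have h2 : ∀ᶠ n in atTop, φ (gapL (S n)) = gapL (S n) :=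
    eventually_atTop.mpr ⟨N, fun n hn => hfix (S n) (by rw [hlen n]; exact hn)⟩
  exact tendsto_nhds_unique (h1.congr' (by filter_upwards [h2] with n hn using hn)) htend

end SparseCantor

/-- There exists a sparse Cantor set `C₀ ⊂ [0,1]` such that every
orientation-preserving `C¹` diffeomorphism of ℝ preserving `C₀` restricts to the
identity on `C₀`, i.e. `diff^{1,+}(C₀)` is trivial. -/
theorem exists_sparse_cantor_trivial_diffeo_group :
    ∃ (C : Set ℝ) (σ : ℝ), 0 < σ ∧ C ⊆ Set.Icc 0 1 ∧ IsCantorSet C ∧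
      SparseSet σ C ∧
      ∀ φ ψ : ℝ → ℝ, IsC1DiffeoPair φ ψ → StrictMono φ → φ '' C = C →
        ∀ x ∈ C, φ x = x := by
  refine ⟨SparseCantor.C0, 1/2, by norm_num, SparseCantor.C0_subset_Icc,
    ⟨⟨0, SparseCantor.zero_mem_C0⟩, SparseCantor.isCompact_C0, SparseCantor.perfect_C0,
      SparseCantor.totallyDisconnected_C0⟩, SparseCantor.sparseSet_C0, ?_⟩
  intro φ ψ hpair hmono himg
  exact SparseCantor.fix_on_C0 hpair hmono himg
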